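/- Under consistency (Y = Y^A a.s.) and positivity P(A=a|L=l) > 0, for any regime g : {0,1} × 𝓛 → {0,1}: E[Y^{g(A,L)}] = E[ 1{g(A,L) ≠ A}·V(A,L) + 1{g(A,L) = A}·E[Y | A, L] ], where V(a,l) = (E[Y^{1−a} | L=l] − E[Y | A=1−a, L=l]·P(A=1−a | L=l)) / P(A=a | L=l). -/

import Mathlib

open scoped Classical
open Finset

noncomputable def pr {Ω : Type*} [Fintype Ω] (p : Ω → ℝ) (E : Ω → Prop) : ℝ :=
  ∑ ω, if E ω then p ω else 0

noncomputable def cex {Ω : Type*} [Fintype Ω] (p : Ω → ℝ) (f : Ω → ℝ) (E : Ω → Prop) : ℝ :=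
  (∑ ω, if E ω then p ω * f ω else 0) / pr p E

noncomputable def ex {Ω : Type*} [Fintype Ω] (p : Ω → ℝ) (f : Ω → ℝ) : ℝ :=
  ∑ ω, p ω * f ω

noncomputable def cpr {Ω : Type*} [Fintype Ω] (p : Ω → ℝ) (E F : Ω → Prop) : ℝ :=
  pr p (fun ω => E ω ∧ F ω) / pr p F

/-- Identification formula for the value of an arbitrary regime `g(A, L)`:
`E[Y^{g(A,L)}] = E[1{g(A,L) ≠ A}·V(A,L) + 1{g(A,L) = A}·E[Y | A, L]]`. -/
theorem stmt16
    {Ω 𝓛 : Type*} [Fintype Ω] [Fintype 𝓛]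
    (p : Ω → ℝ) (hp : ∀ ω, 0 ≤ p ω) (hsum : ∑ ω, p ω = 1)
    (Y : Bool → Ω → ℝ) (Yo : Ω → ℝ) (A : Ω → Bool) (L : Ω → 𝓛)
    (g : Bool → 𝓛 → Bool) (V : Bool → 𝓛 → ℝ)
    -- consistency
    (hcons : ∀ ω, 0 < p ω → Yo ω = Y (A ω) ω)
    -- positivity
    (hpos : ∀ (a : Bool) (l : 𝓛), pr p (fun ω => L ω = l) > 0 →
      cpr p (fun ω => A ω = a) (fun ω => L ω = l) > 0)
    -- V(a,l) = (E[Y^{1−a} | L=l] − E[Y | A=1−a, L=l]·P(A=1−a | L=l)) / P(A=a | L=l)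
    (hV : ∀ a l, V a l =
      (cex p (Y (!a)) (fun ω => L ω = l) -
        cex p Yo (fun ω => A ω = !a ∧ L ω = l) *
          cpr p (fun ω => A ω = !a) (fun ω => L ω = l)) /
      cpr p (fun ω => A ω = a) (fun ω => L ω = l)) :
    ex p (fun ω => Y (g (A ω) (L ω)) ω) =
    ex p (fun ω =>
      if g (A ω) (L ω) ≠ A ω then V (A ω) (L ω)
      else cex p Yo (fun ω' => A ω' = A ω ∧ L ω' = L ω)) := by
  classical
  -- fiberwise decomposition
  have hfib : ∀ f : Ω → ℝ, ex p f =
      ∑ a : Bool, ∑ l : 𝓛, ∑ ω, if A ω = a ∧ L ω = l then p ω * f ω else 0 := by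
    intro f
    have : ∀ ω : Ω, p ω * f ω =
        ∑ a : Bool, ∑ l : 𝓛, if A ω = a ∧ L ω = l then p ω * f ω else 0 := by
      intro ω
      simp [ite_and, Finset.sum_ite_eq]
    unfold ex
    rw [Finset.sum_congr rfl (fun ω _ => this ω)]
    rw [Finset.sum_comm]
    exact Finset.sum_congr rfl (fun a _ => Finset.sum_comm)
  -- sum of constant over a cell
  have hconst : ∀ (E : Ω → Prop) (c : ℝ),
      (∑ ω, if E ω then p ω * c else 0) = pr p E * c := by
    intro E c
    unfold pr
    rw [Finset.sum_mul]
    exact Finset.sum_congr rfl (fun ω _ => by split_ifs <;> simp)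
  -- per-cell equality
  have hcell : ∀ (a : Bool) (l : 𝓛),
      (∑ ω, if A ω = a ∧ L ω = l then p ω * Y (g a l) ω else 0)
      = pr p (fun ω => A ω = a ∧ L ω = l) *
        (if g a l ≠ a then V a l
         else cex p Yo (fun ω' => A ω' = a ∧ L ω' = l)) := by
    intro a l
    have hLnn : (0:ℝ) ≤ pr p (fun ω => L ω = l) := by
      apply Finset.sum_nonneg
      intro ω _; split_ifs
      · exact hp ω
      · exact le_refl 0
    rcases hLnn.eq_or_lt with hL0 | hLpos
    · -- degenerate cell: all p = 0 there
      have hz : ∀ ω, L ω = l → p ω = 0 := by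
        intro ω hω
        have := (Finset.sum_eq_zero_iff_of_nonneg
          (fun ω _ => by split_ifs; exact hp ω; exact le_refl 0)).mp hL0.symm ω (Finset.mem_univ ω)
        simpa [hω] using this
      have h1 : (∑ ω, if A ω = a ∧ L ω = l then p ω * Y (g a l) ω else 0) = 0 := by
        apply Finset.sum_eq_zero
        intro ω _
        split_ifs with h
        · rw [hz ω h.2]; ring
        · rfl
      have h2 : pr p (fun ω => A ω = a ∧ L ω = l) = 0 := by
        apply Finset.sum_eq_zero
        intro ω _
        split_ifs with h
        · exact hz ω h.2
        · rfl
      rw [h1, h2, zero_mul]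
    · -- positive cell
      have hprA : ∀ b : Bool, 0 < pr p (fun ω => A ω = b ∧ L ω = l) := by
        intro b
        have hc := hpos b l hLpos
        unfold cpr at hc
        have := mul_pos hc hLpos
        rwa [div_mul_cancel₀ _ (ne_of_gt hLpos)] at this
      -- consistency on each A-slice
      have hYo : ∀ b : Bool,
          (∑ ω, if A ω = b ∧ L ω = l then p ω * Yo ω else 0)
          = (∑ ω, if A ω = b ∧ L ω = l then p ω * Y b ω else 0) := by
        intro b
        apply Finset.sum_congr rfl
        intro ω _
        split_ifs with h
        · rcases (hp ω).eq_or_lt with h0 | h0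
          · rw [← h0]; ring
          · rw [hcons ω h0, h.1]
        · rfl
      have prLpos := hLpos
      have hA0 : ∀ b : Bool, pr p (fun ω => A ω = b ∧ L ω = l) ≠ 0 :=
        fun b => ne_of_gt (hprA b)
      have hL0 : pr p (fun ω => L ω = l) ≠ 0 := ne_of_gt hLpos
      -- cex for Yo on a cell equals the Y-sum over that cell, divided by cell mass
      have hcexYo : ∀ b : Bool, cex p Yo (fun ω => A ω = b ∧ L ω = l)
          = (∑ ω, if A ω = b ∧ L ω = l then p ω * Y b ω else 0) /
            pr p (fun ω => A ω = b ∧ L ω = l) := by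
        intro b
        unfold cex
        congr 1
        apply Finset.sum_congr rfl
        intro ω _
        by_cases hc : A ω = b ∧ L ω = l
        · rw [if_pos hc, if_pos hc]
          rcases (hp ω).eq_or_lt with h0 | h0
          · rw [← h0]; ring
          · rw [hcons ω h0, hc.1]
        · rw [if_neg hc, if_neg hc]
      -- cpr equals ratio of cell masses
      have hcpr : ∀ b : Bool, cpr p (fun ω => A ω = b) (fun ω => L ω = l)
          = pr p (fun ω => A ω = b ∧ L ω = l) / pr p (fun ω => L ω = l) := by
        intro b
        unfold cpr pr
        rfl
      by_cases hg : g a l = a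
      · -- treated as observed
        simp only [hg, ne_eq, not_true_eq_false, if_false]
        rw [hcexYo a, mul_div_cancel₀ _ (hA0 a)]
      · -- opposite treatment
        have hgn : g a l = !a := by
          revert hg; cases g a l <;> cases a <;> simp
        simp only [ne_eq, hg, not_false_eq_true, if_true]
        rw [hV a l, hcexYo (!a), hcpr a, hcpr (!a)]
        set prL := pr p (fun ω => L ω = l) with hprL
        set prA := pr p (fun ω => A ω = a ∧ L ω = l) with hprAdef
        set prB := pr p (fun ω => A ω = !a ∧ L ω = l) with hprBdef
        set SA := ∑ ω, if A ω = a ∧ L ω = l then p ω * Y (!a) ω else 0 with hSA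
        set SB := ∑ ω, if A ω = !a ∧ L ω = l then p ω * Y (!a) ω else 0 with hSB
        have hcexY : cex p (Y (!a)) (fun ω => L ω = l) = (SA + SB) / prL := by
          unfold cex
          congr 1
          rw [hSA, hSB, ← Finset.sum_add_distrib]
          apply Finset.sum_congr rfl
          intro ω _
          by_cases h1 : L ω = l
          · rcases Bool.eq_or_eq_not (A ω) a with h | h
            · rw [if_pos h1, if_pos ⟨h, h1⟩,
                if_neg (show ¬(A ω = !a ∧ L ω = l) by simp [h]), add_zero]
            · rw [if_pos h1, if_neg (show ¬(A ω = a ∧ L ω = l) by simp [h]),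
                if_pos ⟨h, h1⟩, zero_add]
          · rw [if_neg h1, if_neg (fun hc => h1 hc.2), if_neg (fun hc => h1 hc.2), add_zero]
        rw [hcexY, hgn]
        have hA' : prA ≠ 0 := hA0 a
        have hB' : prB ≠ 0 := hA0 (!a)
        have hL' : prL ≠ 0 := hL0
        field_simp
        linarith [hSA]
  -- put things together
  rw [hfib, hfib]
  apply Finset.sum_congr rfl
  intro a _
  apply Finset.sum_congr rfl
  intro l _
  have lhs_eq : (∑ ω, if A ω = a ∧ L ω = l then p ω * Y (g (A ω) (L ω)) ω else 0)
      = ∑ ω, if A ω = a ∧ L ω = l then p ω * Y (g a l) ω else 0 := by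
    apply Finset.sum_congr rfl
    intro ω _
    by_cases h : A ω = a ∧ L ω = l
    · rw [if_pos h, if_pos h, h.1, h.2]
    · rw [if_neg h, if_neg h]
  rw [lhs_eq, hcell a l, ← hconst]
  apply Finset.sum_congr rfl
  intro ω _
  by_cases h : A ω = a ∧ L ω = l
  · rw [if_pos h, if_pos h, h.1, h.2]
  · rw [if_neg h, if_neg h]
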